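/- Define φ : ℝ² → ℝ by φ(x,y) = x⁴ − y² if y² ≥ x⁴ and φ(x,y) = 0 if y² ≤ x⁴. Then: (a) φ is continuous and there exist continuous φ_1, ψ_2 with φ = φ_1·(x²+x⁴) + ψ_2·(x²+y²) (e.g. φ_1 ≡ 1 and ψ_2(x,y) = −1 for y² ≥ x⁴, ψ_2(x,y) = −(x²+x⁴)/(x²+y²) for 0 < y² ≤ x⁴, suitably extended); (b) for every continuous solution φ = φ_1·(x²+x⁴) + ψ_2·(x²+y²), one has ψ_2(0,0) = −1; in particular supp ψ_2 is not contained in supp φ. -/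

import Mathlib

/-- For `φ(x,y) = x⁴ − y²` when `y² ≥ x⁴` and `0` otherwise: `φ` is continuous, the
equation `φ = φ₁·(x²+x⁴) + ψ₂·(x²+y²)` has a continuous solution, but every continuous
solution satisfies `ψ₂(0,0) = −1`; in particular the support of `ψ₂` is not contained
in the support of `φ`. -/
theorem statement16 (φ : ℝ × ℝ → ℝ)
    (hdef : ∀ p : ℝ × ℝ, φ p = if p.1 ^ 4 ≤ p.2 ^ 2 then p.1 ^ 4 - p.2 ^ 2 else 0) :
    Continuous φ ∧
    (∃ φ₁ ψ₂ : ℝ × ℝ → ℝ, Continuous φ₁ ∧ Continuous ψ₂ ∧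
      ∀ p : ℝ × ℝ, φ p = φ₁ p * (p.1 ^ 2 + p.1 ^ 4) + ψ₂ p * (p.1 ^ 2 + p.2 ^ 2)) ∧
    (∀ φ₁ ψ₂ : ℝ × ℝ → ℝ, Continuous φ₁ → Continuous ψ₂ →
      (∀ p : ℝ × ℝ, φ p = φ₁ p * (p.1 ^ 2 + p.1 ^ 4) + ψ₂ p * (p.1 ^ 2 + p.2 ^ 2)) →
      ψ₂ (0, 0) = -1 ∧
      ¬ (closure {p : ℝ × ℝ | ψ₂ p ≠ 0} ⊆ closure {p : ℝ × ℝ | φ p ≠ 0})) := by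
  have hmin : ∀ p : ℝ × ℝ, φ p = min (p.1 ^ 4 - p.2 ^ 2) 0 := by
    intro p
    rw [hdef]
    rcases le_or_gt (p.1 ^ 4) (p.2 ^ 2) with h | h
    · rw [if_pos h, min_eq_left (by linarith)]
    · rw [if_neg (not_le.mpr h), min_eq_right (by linarith)]
  have hφcont : Continuous φ := by
    have : φ = fun p : ℝ × ℝ => min (p.1 ^ 4 - p.2 ^ 2) 0 := funext hmin
    rw [this]; fun_prop
  refine ⟨hφcont, ?_, ?_⟩
  · -- existence of a continuous solution
    set g : ℝ × ℝ → ℝ := fun p => max (p.1 ^ 4 - p.2 ^ 2) 0 / (p.1 ^ 2 + p.2 ^ 2) with hg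
    have hgbound : ∀ t : ℝ × ℝ, g t ≤ t.1 ^ 2 := by
      intro t
      by_cases h : t.1 ^ 2 + t.2 ^ 2 = 0
      · simp only [hg, h, div_zero]; positivity
      · have hpos : 0 < t.1 ^ 2 + t.2 ^ 2 := lt_of_le_of_ne (by positivity) (Ne.symm h)
        rw [hg, div_le_iff₀ hpos]
        apply max_le
        · nlinarith [sq_nonneg t.1, sq_nonneg t.2, sq_nonneg (t.1 ^ 2)]
        · positivity
    have hgnn : ∀ t : ℝ × ℝ, 0 ≤ g t := by
      intro t
      have : (0:ℝ) ≤ max (t.1 ^ 4 - t.2 ^ 2) 0 := le_max_right _ _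
      have : (0:ℝ) ≤ t.1 ^ 2 + t.2 ^ 2 := by positivity
      positivity
    have hgcont : Continuous g := by
      rw [continuous_iff_continuousAt]
      intro p
      by_cases hp : p = (0, 0)
      · subst hp
        have h0 : g (0, 0) = 0 := by simp [hg]
        rw [ContinuousAt, h0]
        apply squeeze_zero hgnn hgbound
        exact (continuous_fst.pow 2).tendsto' ((0:ℝ), (0:ℝ)) 0 (by norm_num)
      · have hne : p.1 ^ 2 + p.2 ^ 2 ≠ 0 := by
          intro h
          apply hp
          have h1 : p.1 = 0 := by nlinarith [sq_nonneg p.1, sq_nonneg p.2]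
          have h2 : p.2 = 0 := by nlinarith [sq_nonneg p.1, sq_nonneg p.2]
          exact Prod.ext h1 h2
        exact ContinuousAt.div (by fun_prop) (by fun_prop) hne
    refine ⟨fun _ => 1, fun p => -1 - g p, continuous_const, by fun_prop, ?_⟩
    intro p
    rw [hmin]
    by_cases h : p.1 ^ 2 + p.2 ^ 2 = 0
    · have h1 : p.1 = 0 := by nlinarith [sq_nonneg p.1, sq_nonneg p.2]
      have h2 : p.2 = 0 := by nlinarith [sq_nonneg p.1, sq_nonneg p.2]
      simp [h1, h2]
    · have key : g p * (p.1 ^ 2 + p.2 ^ 2) = max (p.1 ^ 4 - p.2 ^ 2) 0 := by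
        rw [hg]; field_simp
      have hmm : min (p.1 ^ 4 - p.2 ^ 2) 0 + max (p.1 ^ 4 - p.2 ^ 2) 0
          = (p.1 ^ 4 - p.2 ^ 2) + 0 := min_add_max _ _
      show min (p.1 ^ 4 - p.2 ^ 2) 0
          = 1 * (p.1 ^ 2 + p.1 ^ 4) + (-1 - g p) * (p.1 ^ 2 + p.2 ^ 2)
      linear_combination hmm + key
  · -- every continuous solution
    intro φ₁ ψ₂ hφ₁ hψ₂ heq
    have hy : ∀ y : ℝ, y ≠ 0 → ψ₂ (0, y) = -1 := by
      intro y hy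
      have h := heq (0, y)
      rw [hdef] at h
      rw [if_pos (by simpa using sq_nonneg y : ((0:ℝ),y).1 ^ 4 ≤ ((0:ℝ),y).2 ^ 2)] at h
      have hy2 : y ^ 2 ≠ 0 := pow_ne_zero 2 hy
      have : (ψ₂ (0, y) + 1) * y ^ 2 = 0 := by linear_combination -h
      rcases mul_eq_zero.mp this with h' | h'
      · linarith
      · exact absurd h' hy2
    have key : ψ₂ (0, 0) = -1 := by
      have hf : Continuous (fun y : ℝ => ψ₂ (0, y)) := by fun_prop
      have heqf : (fun y : ℝ => ψ₂ (0, y)) = fun _ => (-1 : ℝ) := by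
        apply Continuous.ext_on (dense_compl_singleton (0:ℝ)) hf continuous_const
        intro y hy'
        exact hy y hy'
      exact congrFun heqf 0
    refine ⟨key, fun hsub => ?_⟩
    have hopen : IsOpen {p : ℝ × ℝ | ψ₂ p < 0} := isOpen_lt hψ₂ continuous_const
    have hmem : ((0:ℝ), (0:ℝ)) ∈ {p : ℝ × ℝ | ψ₂ p < 0} := by
      simp only [Set.mem_setOf_eq, key]; norm_num
    obtain ⟨ε, hε, hball⟩ := Metric.isOpen_iff.mp hopen _ hmem
    have ht : ((ε/2, 0) : ℝ × ℝ) ∈ Metric.ball ((0:ℝ), (0:ℝ)) ε := by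
      rw [Metric.mem_ball, Prod.dist_eq]
      have h1 : dist (ε/2) (0:ℝ) = ε/2 := by
        rw [Real.dist_eq, sub_zero, abs_of_pos (by linarith)]
      have h2 : dist (0:ℝ) (0:ℝ) = 0 := dist_self 0
      simp only [h1, h2]
      rw [max_eq_left (by linarith)]
      linarith
    have hψt : ψ₂ (ε/2, 0) < 0 := hball ht
    have h1 : ((ε/2, 0) : ℝ × ℝ) ∈ closure {p : ℝ × ℝ | ψ₂ p ≠ 0} :=
      subset_closure (ne_of_lt hψt)
    have h2' := hsub h1
    have hclosed : IsClosed {p : ℝ × ℝ | p.1 ^ 4 ≤ p.2 ^ 2} :=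
      isClosed_le (by fun_prop) (by fun_prop)
    have hsub2 : {p : ℝ × ℝ | φ p ≠ 0} ⊆ {p : ℝ × ℝ | p.1 ^ 4 ≤ p.2 ^ 2} := by
      intro p hp
      by_contra hcon
      simp only [Set.mem_setOf_eq] at hcon
      exact hp (by rw [hdef, if_neg hcon])
    have hfin := closure_minimal hsub2 hclosed h2'
    simp only [Set.mem_setOf_eq] at hfin
    nlinarith [hfin, pow_pos (by linarith : (0:ℝ) < ε/2) 4]
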